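/- arXiv:1011.3685 — 6 statements merged into one kernel-verified Lean document; each statement's English description precedes it below -/
import Mathlib

section
/- Let g¹ and g² be uniformly Lipschitz generators. Then the following two conditions are equivalent. (a) There exists a constant C > 0 such that for all t ∈ [0,T], all y, y′ ∈ ℝⁿ and all z, z′ ∈ ℝ^{n×d}: −4⟨y⁻, g¹(t, y⁺ + y′, z) − g²(t, y′, z′)⟩ ≤ 2·∑_{k=1}^{n} 1_{y_k<0}·|z_k − z′_k|² + C·|y⁻|². (b) For every k ∈ {1,…,n}, every t ∈ [0,T], every y′ ∈ ℝⁿ, every δ ∈ ℝⁿ with δ ≥ 0 and δ_k = 0, and all z, z′ ∈ ℝ^{n×d} with z_k = z′_k, one has g¹_k(t, δ + y′, z) ≥ g²_k(t, y′, z′). (Condition (a) is Hu–Peng's necessary and sufficient criterion for the multidimensional comparison theorem; the theorem asserts its equivalence with the explicit condition (b).) -/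
open scoped RealInnerProductSpace

noncomputable section

/-- `ℝⁿ` with the Euclidean norm. -/
abbrev Vec (n : ℕ) := EuclideanSpace ℝ (Fin n)

/-- Real `n × d` matrices with the Frobenius norm. -/
abbrev Mat (n d : ℕ) := EuclideanSpace ℝ (Fin n × Fin d)

/-- The `k`-th row of a matrix. -/
def row {n d : ℕ} (z : Mat n d) (k : Fin n) : Vec d := WithLp.toLp 2 (fun j => z (k, j))

/-- Componentwise positive part. -/
def pos {n : ℕ} (x : Vec n) : Vec n := WithLp.toLp 2 (fun i => max (x i) 0)

/-- Componentwise negative part. -/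
def neg {n : ℕ} (x : Vec n) : Vec n := WithLp.toLp 2 (fun i => max (-(x i)) 0)

/-- A generator is uniformly Lipschitz on `[0,T]`. -/
def UniformlyLipschitz {n d : ℕ} (T : ℝ)
    (g : ℝ → Vec n → Mat n d → Vec n) : Prop :=
  ∃ L : ℝ, 0 ≤ L ∧ ∀ t ∈ Set.Icc (0:ℝ) T, ∀ y y' : Vec n, ∀ z z' : Mat n d,
    ‖g t y z - g t y' z'‖ ≤ L * (‖y - y'‖ + ‖z - z'‖)

lemma normsq {m : Type*} [Fintype m] (x : EuclideanSpace ℝ m) :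
    ‖x‖ ^ 2 = ∑ i, x i ^ 2 := by
  rw [EuclideanSpace.norm_eq, Real.sq_sqrt (by positivity)]
  simp [Real.norm_eq_abs, sq_abs]

lemma innerv {m : Type*} [Fintype m] (x y : EuclideanSpace ℝ m) :
    ⟪x, y⟫ = ∑ i, x i * y i := by
  simp [PiLp.inner_apply, RCLike.inner_apply, mul_comm]

lemma abs_apply_le_norm {m : Type*} [Fintype m] (x : EuclideanSpace ℝ m) (i : m) :
    |x i| ≤ ‖x‖ := by
  have h : (x i) ^ 2 ≤ ‖x‖ ^ 2 := by
    rw [normsq]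
    exact Finset.single_le_sum (f := fun j => x j ^ 2) (fun j _ => sq_nonneg _)
      (Finset.mem_univ i)
  nlinarith [abs_nonneg (x i), norm_nonneg x, sq_abs (x i)]

lemma norm_eq_of_sq_eq {a b : ℝ} (ha : 0 ≤ a) (hb : 0 ≤ b) (h : a ^ 2 = b ^ 2) :
    a = b := by nlinarith

/-- Hu–Peng's criterion for the multidimensional comparison theorem is
equivalent to the explicit quasi-monotone domination condition. -/
theorem hu_peng_comparison_criterion_explicit
    {n d : ℕ} (hn : 0 < n) (hd : 0 < d) (T : ℝ) (hT : 0 < T)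
    (g₁ g₂ : ℝ → Vec n → Mat n d → Vec n)
    (hg₁ : UniformlyLipschitz T g₁) (hg₂ : UniformlyLipschitz T g₂) :
    (∃ C : ℝ, 0 < C ∧ ∀ t ∈ Set.Icc (0:ℝ) T, ∀ y y' : Vec n, ∀ z z' : Mat n d,
        -4 * ⟪neg y, g₁ t (pos y + y') z - g₂ t y' z'⟫ ≤
          2 * ∑ k : Fin n, (if y k < 0 then (1:ℝ) else 0) * ‖row z k - row z' k‖ ^ 2
            + C * ‖neg y‖ ^ 2)
    ↔
    (∀ k : Fin n, ∀ t ∈ Set.Icc (0:ℝ) T, ∀ y' δ : Vec n,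
        (∀ i, 0 ≤ δ i) → δ k = 0 →
        ∀ z z' : Mat n d, row z k = row z' k →
          g₂ t y' z' k ≤ g₁ t (δ + y') z k) := by
  obtain ⟨L, hL0, hLip⟩ := hg₁
  constructor
  · rintro ⟨C, hC, hcrit⟩ k t ht y' δ hδ hδk z z' hrow
    by_contra hcon
    push_neg at hcon
    set Δ : ℝ := g₁ t (δ + y') z k - g₂ t y' z' k with hΔ
    have hΔneg : Δ < 0 := by rw [hΔ]; linarith
    set ε : ℝ := -2 * Δ / C with hε
    have hεpos : 0 < ε := by
      rw [hε]
      have h2 : 0 < -2 * Δ := by linarith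
      exact div_pos h2 hC
    have hCε : C * ε = -2 * Δ := by
      rw [hε]; field_simp
    set y : Vec n := WithLp.toLp 2 (fun i => if i = k then -ε else δ i) with hy
    have hyk : y k = -ε := by simp [hy]
    have hyi : ∀ i, i ≠ k → y i = δ i := by intro i hi; simp [hy, hi]
    have hposy : pos y = δ := by
      ext i
      by_cases hi : i = k
      · subst hi
        simp [pos, hyk, hδk, max_eq_right hεpos.le, neg_nonpos]
        linarith
      · simp [pos, hyi i hi, max_eq_left (hδ i)]
    have hnegy : ∀ i, neg y i = if i = k then ε else 0 := by
      intro i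
      by_cases hi : i = k
      · subst hi; simp [neg, hyk, max_eq_left hεpos.le]
      · simp [neg, hi, hyi i hi, max_eq_right (neg_nonpos.mpr (hδ i))]
    have hinner : ⟪neg y, g₁ t (pos y + y') z - g₂ t y' z'⟫ = ε * Δ := by
      rw [innerv]
      rw [Finset.sum_eq_single k]
      · rw [hnegy k, hposy]; simp [hΔ, PiLp.sub_apply]
      · intro i _ hi; rw [hnegy i]; simp [hi]
      · intro h; exact absurd (Finset.mem_univ k) h
    have hsum : ∑ j : Fin n, (if y j < 0 then (1:ℝ) else 0) * ‖row z j - row z' j‖ ^ 2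
        = 0 := by
      apply Finset.sum_eq_zero
      intro i _
      by_cases hi : i = k
      · subst hi; rw [hrow]; simp
      · have : ¬ y i < 0 := by rw [hyi i hi]; exact not_lt.mpr (hδ i)
        simp [this]
    have hnorm : ‖neg y‖ ^ 2 = ε ^ 2 := by
      rw [normsq, Finset.sum_eq_single k]
      · rw [hnegy k]; simp
      · intro i _ hi; rw [hnegy i]; simp [hi]
      · intro h; exact absurd (Finset.mem_univ k) h
    have key := hcrit t ht y y' z z'
    rw [hinner, hsum, hnorm] at key
    nlinarith [mul_pos hεpos (neg_pos.mpr hΔneg)]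
  · intro hmono
    refine ⟨2 * L ^ 2 + 1, by positivity, ?_⟩
    intro t ht y y' z z'
    have key : ∀ k : Fin n,
        -4 * (neg y k * (g₁ t (pos y + y') z k - g₂ t y' z' k)) ≤
          2 * ((if y k < 0 then (1:ℝ) else 0) * ‖row z k - row z' k‖ ^ 2)
            + (2 * L ^ 2 + 1) * (neg y k) ^ 2 := by
      intro k
      by_cases hk : y k < 0
      · set zh : Mat n d := WithLp.toLp 2 (fun p => if p.1 = k then z' p else z p) with hzh
        have hrowk : row zh k = row z' k := by
          ext j; simp [row, hzh]
        have h1 : g₂ t y' z' k ≤ g₁ t (pos y + y') zh k := by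
          refine hmono k t ht y' (pos y) (fun i => le_max_right _ _) ?_ zh z' hrowk
          simp [pos, max_eq_right hk.le]
        have hzsub : ‖z - zh‖ = ‖row z k - row z' k‖ := by
          apply norm_eq_of_sq_eq (norm_nonneg _) (norm_nonneg _)
          rw [normsq, normsq]
          rw [Fintype.sum_prod_type]
          rw [Finset.sum_eq_single k]
          · apply Finset.sum_congr rfl
            intro j _
            simp [PiLp.sub_apply, hzh, row]
          · intro i _ hi
            apply Finset.sum_eq_zero
            intro j _
            simp [PiLp.sub_apply, hzh, hi]
          · intro h; exact absurd (Finset.mem_univ k) h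
        have h2 : ‖g₁ t (pos y + y') z - g₁ t (pos y + y') zh‖
            ≤ L * ‖row z k - row z' k‖ := by
          have := hLip t ht (pos y + y') (pos y + y') z zh
          simpa [hzsub] using this
        have h3 : |g₁ t (pos y + y') z k - g₁ t (pos y + y') zh k|
            ≤ L * ‖row z k - row z' k‖ := by
          calc |g₁ t (pos y + y') z k - g₁ t (pos y + y') zh k|
              = |(g₁ t (pos y + y') z - g₁ t (pos y + y') zh) k| := by
                simp [PiLp.sub_apply]
            _ ≤ ‖g₁ t (pos y + y') z - g₁ t (pos y + y') zh‖ := abs_apply_le_norm _ _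
            _ ≤ L * ‖row z k - row z' k‖ := h2
        have hD : -(L * ‖row z k - row z' k‖)
            ≤ g₁ t (pos y + y') z k - g₂ t y' z' k := by
          have := neg_abs_le (g₁ t (pos y + y') z k - g₁ t (pos y + y') zh k)
          linarith [h1, h3.trans_eq rfl, neg_le_neg h3,
            (abs_le.mp h3).1]
        have ha : 0 ≤ neg y k := le_max_right _ _
        have hr : 0 ≤ ‖row z k - row z' k‖ := norm_nonneg _
        rw [if_pos hk]
        nlinarith [mul_nonneg ha (by linarith : (0:ℝ) ≤
            (g₁ t (pos y + y') z k - g₂ t y' z' k) + L * ‖row z k - row z' k‖),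
          sq_nonneg (‖row z k - row z' k‖ - L * neg y k), mul_nonneg hL0 ha]
      · have hz : neg y k = 0 := by
          simp [neg, max_eq_right, neg_nonpos.mpr (not_lt.mp hk)]
        rw [hz, if_neg hk]
        simp
    calc -4 * ⟪neg y, g₁ t (pos y + y') z - g₂ t y' z'⟫
        = ∑ k : Fin n, -4 * (neg y k * (g₁ t (pos y + y') z k - g₂ t y' z' k)) := by
          rw [innerv, Finset.mul_sum]
          apply Finset.sum_congr rfl
          intro k _
          simp [PiLp.sub_apply]
      _ ≤ ∑ k : Fin n, (2 * ((if y k < 0 then (1:ℝ) else 0) * ‖row z k - row z' k‖ ^ 2)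
            + (2 * L ^ 2 + 1) * (neg y k) ^ 2) :=
          Finset.sum_le_sum fun k _ => key k
      _ = 2 * ∑ k : Fin n, (if y k < 0 then (1:ℝ) else 0) * ‖row z k - row z' k‖ ^ 2
            + (2 * L ^ 2 + 1) * ‖neg y‖ ^ 2 := by
          rw [Finset.sum_add_distrib, ← Finset.mul_sum, ← Finset.mul_sum, normsq]
end
end

section
/- Let g¹ and g² be uniformly Lipschitz generators. Then the following two conditions are equivalent. (a) There exists a constant C > 0 such that for all t ∈ [0,T], all y, y′ ∈ ℝⁿ and all z, z′ ∈ ℝ^{n×d}: 4⟨y, g¹(t, y′, z) − g²(t, y′, z′)⟩ ≤ 2·∑_{k=1}^{n} |z_k − z′_k|² + C·|y|². (b) g¹(t, y, z) = g²(t, y, z) for all t ∈ [0,T], y ∈ ℝⁿ and z ∈ ℝ^{n×d}. (This is the deterministic core of the uniqueness theorem for generators of multidimensional BSDEs.) -/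
open scoped RealInnerProductSpace

noncomputable section

/-- the deterministic core of the uniqueness theorem for generators of
multidimensional BSDEs. -/
theorem uniqueness_criterion_generators
    {n d : ℕ} (hn : 0 < n) (hd : 0 < d) (T : ℝ) (hT : 0 < T)
    (g₁ g₂ : ℝ → Vec n → Mat n d → Vec n)
    (hg₁ : UniformlyLipschitz T g₁) (hg₂ : UniformlyLipschitz T g₂) :
    (∃ C : ℝ, 0 < C ∧ ∀ t ∈ Set.Icc (0:ℝ) T, ∀ y y' : Vec n, ∀ z z' : Mat n d,
        4 * ⟪y, g₁ t y' z - g₂ t y' z'⟫ ≤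
          2 * ∑ k : Fin n, ‖row z k - row z' k‖ ^ 2 + C * ‖y‖ ^ 2)
    ↔
    (∀ t ∈ Set.Icc (0:ℝ) T, ∀ y : Vec n, ∀ z : Mat n d, g₁ t y z = g₂ t y z) := by
  have hrow : ∀ z z' : Mat n d,
      ∑ k : Fin n, ‖row z k - row z' k‖ ^ 2 = ‖z - z'‖ ^ 2 := by
    intro z z'
    have h1 : ∀ k : Fin n, ‖row z k - row z' k‖ ^ 2
        = ∑ j : Fin d, ((z - z') (k, j)) ^ 2 := by
      intro k
      have : ‖row z k - row z' k‖ = Real.sqrt (∑ j : Fin d, ‖(row z k - row z' k) j‖ ^ 2) :=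
        EuclideanSpace.norm_eq _
      rw [this, Real.sq_sqrt (Finset.sum_nonneg fun _ _ => sq_nonneg _)]
      refine Finset.sum_congr rfl fun j _ => ?_
      have : (row z k - row z' k) j = (z - z') (k, j) := by
        simp [row]
      rw [this, Real.norm_eq_abs, sq_abs]
    have h2 : ‖z - z'‖ ^ 2 = ∑ p : Fin n × Fin d, ((z - z') p) ^ 2 := by
      rw [EuclideanSpace.norm_eq, Real.sq_sqrt (Finset.sum_nonneg fun _ _ => sq_nonneg _)]
      exact Finset.sum_congr rfl fun p _ => by rw [Real.norm_eq_abs, sq_abs]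
    rw [h2, Fintype.sum_prod_type]
    exact Finset.sum_congr rfl fun k _ => h1 k
  constructor
  · rintro ⟨C, hC, h⟩ t ht y z
    set Δ : Vec n := g₁ t y z - g₂ t y z with hΔ
    by_contra hne
    have hΔne : Δ ≠ 0 := sub_ne_zero.mpr hne
    have hΔpos : (0:ℝ) < ‖Δ‖ ^ 2 := pow_pos (norm_pos_iff.mpr hΔne) 2
    set s : ℝ := 2 / C with hs
    have hspos : 0 < s := div_pos two_pos hC
    have := h t ht (s • Δ) y z z
    have hz0 : ∑ k : Fin n, ‖row z k - row z k‖ ^ 2 = 0 := by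
      rw [hrow]; simp
    rw [hz0] at this
    have hinner : ⟪s • Δ, Δ⟫ = s * ‖Δ‖ ^ 2 := by
      rw [real_inner_smul_left, real_inner_self_eq_norm_sq]
    rw [← hΔ, hinner, norm_smul, Real.norm_eq_abs, abs_of_pos hspos, mul_pow] at this
    -- 4 * (s * ‖Δ‖²) ≤ 2*0 + C * (s² * ‖Δ‖²), s = 2/C
    have hsC : C * s = 2 := by rw [hs]; field_simp
    nlinarith [mul_pos hspos hΔpos]
  · intro hgg
    obtain ⟨L, hL, hLip⟩ := hg₁
    refine ⟨2 * L ^ 2 + 1, by positivity, fun t ht y y' z z' => ?_⟩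
    have heq : g₁ t y' z - g₂ t y' z' = g₁ t y' z - g₁ t y' z' := by
      rw [hgg t ht y' z']
    rw [heq, hrow]
    have h1 : ⟪y, g₁ t y' z - g₁ t y' z'⟫ ≤ ‖y‖ * ‖g₁ t y' z - g₁ t y' z'‖ :=
      real_inner_le_norm _ _
    have h2 : ‖g₁ t y' z - g₁ t y' z'‖ ≤ L * (‖y' - y'‖ + ‖z - z'‖) := hLip t ht y' y' z z'
    rw [sub_self, norm_zero, zero_add] at h2
    have hy : (0:ℝ) ≤ ‖y‖ := norm_nonneg _
    have hzz : (0:ℝ) ≤ ‖z - z'‖ := norm_nonneg _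
    nlinarith [sq_nonneg (‖z - z'‖ - L * ‖y‖), sq_nonneg ‖y‖,
      mul_le_mul_of_nonneg_left h2 hy]
end
end

section
/- Let g be a uniformly Lipschitz generator. Then the following two conditions are equivalent. (a) There exists a constant C > 0 such that for all t ∈ [0,T], all y ∈ ℝⁿ and all z ∈ ℝ^{n×d}: −4⟨y⁻, g(t, y⁺, z)⟩ ≤ 2·∑_{k=1}^{n} 1_{y_k<0}·|z_k|² + C·|y⁻|². (b) For every k ∈ {1,…,n}, every t ∈ [0,T], every δ ∈ ℝⁿ with δ ≥ 0 and δ_k = 0, and every ζ ∈ ℝ^{n×d} with ζ_k = 0 (k-th row zero), one has g_k(t, δ, ζ) ≥ 0. (This is the deterministic core of the characterization of nonnegativity of solutions to multidimensional BSDEs.) -/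
open scoped RealInnerProductSpace

noncomputable section

lemma euc_norm_sq {ι : Type*} [Fintype ι] (x : EuclideanSpace ℝ ι) :
    ‖x‖ ^ 2 = ∑ i, x i ^ 2 := by
  rw [EuclideanSpace.norm_eq, Real.sq_sqrt (by positivity)]
  simp [sq_abs]

lemma euc_inner {ι : Type*} [Fintype ι] (x y : EuclideanSpace ℝ ι) :
    ⟪x, y⟫ = ∑ i, x i * y i := by
  simp [PiLp.inner_apply, RCLike.inner_apply, mul_comm]

lemma euc_abs_le_norm {ι : Type*} [Fintype ι] (x : EuclideanSpace ℝ ι) (i : ι) :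
    |x i| ≤ ‖x‖ := by
  have h : (x i)^2 ≤ ‖x‖^2 := by
    rw [euc_norm_sq]
    exact Finset.single_le_sum (f := fun j => x j ^ 2) (fun j _ => sq_nonneg _)
      (Finset.mem_univ i)
  calc |x i| = Real.sqrt ((x i)^2) := (Real.sqrt_sq_eq_abs _).symm
  _ ≤ Real.sqrt (‖x‖^2) := Real.sqrt_le_sqrt h
  _ = ‖x‖ := Real.sqrt_sq (norm_nonneg _)

/-- the deterministic core of the characterization of nonnegativity of
solutions to multidimensional BSDEs. -/
theorem nonnegativity_criterion
    {n d : ℕ} (hn : 0 < n) (hd : 0 < d) (T : ℝ) (hT : 0 < T)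
    (g : ℝ → Vec n → Mat n d → Vec n) (hg : UniformlyLipschitz T g) :
    (∃ C : ℝ, 0 < C ∧ ∀ t ∈ Set.Icc (0:ℝ) T, ∀ y : Vec n, ∀ z : Mat n d,
        -4 * ⟪neg y, g t (pos y) z⟫ ≤
          2 * ∑ k : Fin n, (if y k < 0 then (1:ℝ) else 0) * ‖row z k‖ ^ 2
            + C * ‖neg y‖ ^ 2)
    ↔
    (∀ k : Fin n, ∀ t ∈ Set.Icc (0:ℝ) T, ∀ δ : Vec n,
        (∀ i, 0 ≤ δ i) → δ k = 0 →
        ∀ ζ : Mat n d, row ζ k = 0 → 0 ≤ g t δ ζ k) := by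
  obtain ⟨L, hL0, hLip⟩ := hg
  constructor
  · -- (a) → (b)
    rintro ⟨C, hC, hCa⟩ k t ht δ hδ hδk ζ hζ
    by_contra hneg
    push_neg at hneg
    set G := g t δ ζ k with hG
    set ε : ℝ := -2 * G / C with hε
    have hεpos : 0 < ε := by
      have h2 : 0 < -2 * G := by nlinarith
      positivity
    set y : Vec n := WithLp.toLp 2 (fun i => if i = k then -ε else δ i) with hy
    have hposy : pos y = δ := by
      ext i
      simp only [pos, hy, WithLp.ofLp_toLp]
      by_cases hik : i = k
      · subst hik
        rw [hδk, if_pos rfl]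
        exact max_eq_right (by linarith)
      · rw [if_neg hik]
        exact max_eq_left (hδ i)
    have hnegk : neg y k = ε := by
      simp only [neg, hy, if_pos rfl, neg_neg, ↓reduceIte]
      exact max_eq_left hεpos.le
    have hnegi : ∀ i : Fin n, i ≠ k → neg y i = 0 := by
      intro i hik
      simp only [neg, hy, if_neg hik]
      exact max_eq_right (by linarith [hδ i])
    have hA := hCa t ht y ζ
    rw [hposy] at hA
    have hin : ⟪neg y, g t δ ζ⟫ = ε * G := by
      rw [euc_inner, Finset.sum_eq_single k]
      · rw [hnegk, hG]
      · intro i _ hik; rw [hnegi i hik]; ring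
      · intro h; exact absurd (Finset.mem_univ k) h
    have hsum : ∑ i : Fin n, (if y i < 0 then (1:ℝ) else 0) * ‖row ζ i‖ ^ 2 = 0 := by
      apply Finset.sum_eq_zero
      intro i _
      by_cases hik : i = k
      · subst hik; rw [hζ]; simp
      · have hyi : ¬ (y i < 0) := by
          simp only [hy, if_neg hik]
          exact not_lt.mpr (hδ i)
        rw [if_neg hyi]; ring
    have hn2 : ‖neg y‖ ^ 2 = ε ^ 2 := by
      rw [euc_norm_sq, Finset.sum_eq_single k]
      · rw [hnegk]
      · intro i _ hik; rw [hnegi i hik]; ring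
      · intro h; exact absurd (Finset.mem_univ k) h
    rw [hin, hsum, hn2] at hA
    have hεC : C * ε = -2 * G := by
      rw [hε]; field_simp
    nlinarith [mul_pos hεpos (neg_pos.mpr hneg), sq_nonneg ε]
  · -- (b) → (a)
    intro hb
    refine ⟨2 * L ^ 2 + 1, by positivity, fun t ht y z => ?_⟩
    -- pointwise bound
    have key : ∀ k : Fin n, -4 * (neg y k * g t (pos y) z k) ≤
        2 * ((if y k < 0 then (1:ℝ) else 0) * ‖row z k‖ ^ 2)
          + (2 * L ^ 2 + 1) * (neg y k) ^ 2 := by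
      intro k
      by_cases hk : y k < 0
      · -- the matrix with k-th row zeroed
        set ζ : Mat n d := WithLp.toLp 2 (fun p => if p.1 = k then 0 else z p) with hζ
        have hrow : row ζ k = 0 := by
          ext j; simp [row, hζ]
        have hposk : pos y k = 0 := by
          simp [pos, max_eq_right hk.le]
        have hb' : 0 ≤ g t (pos y) ζ k :=
          hb k t ht (pos y) (fun i => le_max_right _ _) hposk ζ hrow
        -- Lipschitz in z: ‖z - ζ‖ = ‖row z k‖
        have hzz : ‖(z : Mat n d) - ζ‖ = ‖row z k‖ := by
          have h1 : ‖(z : Mat n d) - ζ‖ ^ 2 = ‖row z k‖ ^ 2 := by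
            rw [euc_norm_sq, euc_norm_sq]
            rw [Fintype.sum_prod_type]
            rw [Finset.sum_eq_single k]
            · apply Finset.sum_congr rfl
              intro j _
              have : ((z : Mat n d) - ζ) (k, j) = z (k, j) := by
                simp [hζ, PiLp.sub_apply]
              rw [this]; rfl
            · intro i _ hik
              apply Finset.sum_eq_zero
              intro j _
              have : ((z : Mat n d) - ζ) (i, j) = 0 := by
                simp [hζ, PiLp.sub_apply, hik]
              rw [this]; ring
            · intro h; exact absurd (Finset.mem_univ k) h
          calc ‖(z : Mat n d) - ζ‖ = Real.sqrt (‖(z : Mat n d) - ζ‖ ^ 2) :=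
                (Real.sqrt_sq (norm_nonneg _)).symm
          _ = Real.sqrt (‖row z k‖ ^ 2) := by rw [h1]
          _ = ‖row z k‖ := Real.sqrt_sq (norm_nonneg _)
        have hdiff : |g t (pos y) z k - g t (pos y) ζ k| ≤ L * ‖row z k‖ := by
          have h1 : |(g t (pos y) z - g t (pos y) ζ) k| ≤ ‖g t (pos y) z - g t (pos y) ζ‖ :=
            euc_abs_le_norm _ k
          have h2 := hLip t ht (pos y) (pos y) z ζ
          simp only [sub_self, norm_zero, zero_add] at h2
          have h3 : (g t (pos y) z - g t (pos y) ζ) k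
              = g t (pos y) z k - g t (pos y) ζ k := by
            simp [PiLp.sub_apply]
          rw [h3] at h1
          rw [hzz] at h2
          linarith
        have hglb : -(L * ‖row z k‖) ≤ g t (pos y) z k := by
          have := abs_le.mp hdiff
          linarith [this.1]
        have ha : 0 ≤ neg y k := le_max_right _ _
        have hmul : -4 * (neg y k * g t (pos y) z k) ≤ 4 * (neg y k * (L * ‖row z k‖)) := by
          nlinarith
        have hamgm : 4 * (neg y k * (L * ‖row z k‖)) ≤
            2 * ‖row z k‖ ^ 2 + 2 * L ^ 2 * (neg y k) ^ 2 := by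
          nlinarith [sq_nonneg (‖row z k‖ - L * neg y k)]
        simp only [if_pos hk, one_mul]
        nlinarith [sq_nonneg (neg y k)]
      · -- y k ≥ 0 so neg y k = 0
        have : neg y k = 0 := by
          simp [neg, max_eq_right (by linarith [not_lt.mp hk] : -(y k) ≤ 0)]
        rw [this]
        simp only [if_neg hk]
        nlinarith [sq_nonneg (‖row z k‖)]
    have hinner : -4 * ⟪neg y, g t (pos y) z⟫
        = ∑ k : Fin n, -4 * (neg y k * g t (pos y) z k) := by
      rw [euc_inner, Finset.mul_sum]
    rw [hinner, euc_norm_sq (neg y), Finset.mul_sum, Finset.mul_sum, ← Finset.sum_add_distrib]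
    exact Finset.sum_le_sum fun k _ => key k
end
end

section
/- Let g be a uniformly Lipschitz generator and fix a constant vector a ∈ ℝⁿ. Then the following two conditions are equivalent. (a) There exists a constant C > 0 such that for all t ∈ [0,T], all y ∈ ℝⁿ and all z ∈ ℝ^{n×d}: 4⟨y, g(t, a, z)⟩ ≤ 2·∑_{k=1}^{n} |z_k|² + C·|y|². (b) g(t, a, 0) = 0 for all t ∈ [0,T]. (This is the deterministic core of the constancy property of the multidimensional conditional g-expectation at the constant a: the solution of the BSDE with terminal value a is identically a if and only if (b) holds.) -/
open scoped RealInnerProductSpace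

noncomputable section

/-- the deterministic core of the constancy property of the
multidimensional conditional `g`-expectation at a fixed constant `a`. -/
theorem constancy_criterion
    {n d : ℕ} (hn : 0 < n) (hd : 0 < d) (T : ℝ) (hT : 0 < T)
    (g : ℝ → Vec n → Mat n d → Vec n) (hg : UniformlyLipschitz T g) (a : Vec n) :
    (∃ C : ℝ, 0 < C ∧ ∀ t ∈ Set.Icc (0:ℝ) T, ∀ y : Vec n, ∀ z : Mat n d,
        4 * ⟪y, g t a z⟫ ≤ 2 * ∑ k : Fin n, ‖row z k‖ ^ 2 + C * ‖y‖ ^ 2)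
    ↔
    (∀ t ∈ Set.Icc (0:ℝ) T, g t a 0 = 0) := by
  obtain ⟨L, hL0, hL⟩ := hg
  constructor
  · rintro ⟨C, hC, h⟩ t ht
    set v := g t a 0 with hv
    have key : ∀ y : Vec n, 4 * ⟪y, v⟫ ≤ C * ‖y‖ ^ 2 := by
      intro y
      have hz : ∑ k : Fin n, ‖row (0 : Mat n d) k‖ ^ 2 = 0 := by
        apply Finset.sum_eq_zero
        intro k _
        have hr : row (0 : Mat n d) k = 0 := by ext j; simp [row]
        simp [hr]
      have := h t ht y 0
      rw [hz] at this
      linarith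
    have h1 := key ((2 / C) • v)
    rw [real_inner_smul_left, real_inner_self_eq_norm_sq, norm_smul] at h1
    have habs : |(2 : ℝ) / C| = 2 / C := abs_of_pos (by positivity)
    rw [Real.norm_eq_abs, habs, mul_pow] at h1
    have hv2 : ‖v‖ ^ 2 ≤ 0 := by
      have e0 : C * ((2 / C) ^ 2 * ‖v‖ ^ 2) = 4 / C * ‖v‖ ^ 2 := by
        field_simp; ring
      have e1 : 4 * (2 / C * ‖v‖ ^ 2) = 8 / C * ‖v‖ ^ 2 := by ring
      have e2 : 8 / C * ‖v‖ ^ 2 - 4 / C * ‖v‖ ^ 2 = 4 / C * ‖v‖ ^ 2 := by ring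
      have h3 : 4 / C * ‖v‖ ^ 2 ≤ 0 := by linarith
      have h4 := mul_le_mul_of_nonneg_left h3 hC.le
      have e3 : C * (4 / C * ‖v‖ ^ 2) = 4 * ‖v‖ ^ 2 := by field_simp
      linarith [h4, e3]
    have : ‖v‖ = 0 := by nlinarith [norm_nonneg v, sq_nonneg ‖v‖]
    exact norm_eq_zero.mp this
  · intro h0
    refine ⟨2 * L ^ 2 + 1, by positivity, ?_⟩
    intro t ht y z
    have hsum : ∑ k : Fin n, ‖row z k‖ ^ 2 = ‖z‖ ^ 2 := by
      have h1 : ∀ k, ‖row z k‖ ^ 2 = ∑ j, z (k, j) ^ 2 := by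
        intro k
        rw [EuclideanSpace.norm_eq, Real.sq_sqrt (by positivity)]
        simp [row, Real.norm_eq_abs, sq_abs]
      simp_rw [h1]
      have e : ‖z‖ ^ 2 = ∑ i : Fin n × Fin d, z i ^ 2 := by
        rw [EuclideanSpace.norm_eq, Real.sq_sqrt (by positivity)]
        simp [Real.norm_eq_abs, sq_abs]
      rw [e, Fintype.sum_prod_type]
    have hgz : ‖g t a z‖ ≤ L * ‖z‖ := by
      have := hL t ht a a z 0
      simpa [h0 t ht] using this
    have hin : ⟪y, g t a z⟫ ≤ ‖y‖ * ‖g t a z‖ := real_inner_le_norm _ _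
    rw [hsum]
    nlinarith [sq_nonneg (‖z‖ - L * ‖y‖), norm_nonneg y, norm_nonneg z,
      norm_nonneg (g t a z), mul_nonneg (norm_nonneg y) (norm_nonneg (g t a z)), sq_nonneg ‖y‖,
      mul_le_mul_of_nonneg_left hgz (norm_nonneg y)]
end
end

section
/- Let E be a real vector space and order ℝⁿ componentwise. Let ρ : E → ℝⁿ be convex (ρ(λξ + (1−λ)η) ≤ λρ(ξ) + (1−λ)ρ(η) for all ξ, η ∈ E and λ ∈ [0,1]) with ρ(0) = 0. Then for all γ_A > 0, γ_B > 0 and all ξ, η ∈ E: (γ_A + γ_B)·ρ(ξ/(γ_A + γ_B)) ≤ γ_A·ρ((ξ − η)/γ_A) + γ_B·ρ(η/γ_B), and equality holds for the optimal transfer η* = (γ_B/(γ_A + γ_B))·ξ. Consequently the inf-convolution of the γ_A-tolerant and γ_B-tolerant risk measures derived from ρ equals the (γ_A + γ_B)-tolerant risk measure: inf over η of the right-hand side equals the left-hand side and is attained at η*. -/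
/-- inf-convolution of γ-tolerant risk measures derived from a convex
`ρ : E → ℝⁿ` with `ρ(0)=0`: the γ_A-tolerant and γ_B-tolerant measures inf-convolve to
the (γ_A+γ_B)-tolerant one, with optimal transfer `η* = (γ_B/(γ_A+γ_B))·ξ`. -/
theorem infConvolution_tolerant_risk_measures
    {E : Type*} [AddCommGroup E] [Module ℝ E] {n : ℕ}
    (ρ : E → (Fin n → ℝ))
    (hconv : ∀ ξ η : E, ∀ lam ∈ Set.Icc (0:ℝ) 1,
      ρ (lam • ξ + (1 - lam) • η) ≤ lam • ρ ξ + (1 - lam) • ρ η)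
    (h0 : ρ 0 = 0)
    (γA γB : ℝ) (hA : 0 < γA) (hB : 0 < γB) (ξ : E) :
    (∀ η : E,
      (γA + γB) • ρ ((γA + γB)⁻¹ • ξ) ≤
        γA • ρ (γA⁻¹ • (ξ - η)) + γB • ρ (γB⁻¹ • η)) ∧
    (γA + γB) • ρ ((γA + γB)⁻¹ • ξ) =
      γA • ρ (γA⁻¹ • (ξ - (γB / (γA + γB)) • ξ)) +
        γB • ρ (γB⁻¹ • ((γB / (γA + γB)) • ξ)) ∧
    IsLeast {v : Fin n → ℝ | ∃ η : E,
        v = γA • ρ (γA⁻¹ • (ξ - η)) + γB • ρ (γB⁻¹ • η)}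
      ((γA + γB) • ρ ((γA + γB)⁻¹ • ξ)) := by
  have hs : (0:ℝ) < γA + γB := by linarith
  have hs0 : (γA + γB) ≠ 0 := ne_of_gt hs
  have hA0 : γA ≠ 0 := ne_of_gt hA
  have hB0 : γB ≠ 0 := ne_of_gt hB
  set lam : ℝ := γA / (γA + γB) with hlam
  have hlam_mem : lam ∈ Set.Icc (0:ℝ) 1 := by
    constructor
    · positivity
    · rw [hlam, div_le_one hs]; linarith
  have h1lam : 1 - lam = γB / (γA + γB) := by
    rw [hlam, eq_div_iff hs0, sub_mul, div_mul_cancel₀ _ hs0]; ring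
  -- main inequality
  have hineq : ∀ η : E,
      (γA + γB) • ρ ((γA + γB)⁻¹ • ξ) ≤
        γA • ρ (γA⁻¹ • (ξ - η)) + γB • ρ (γB⁻¹ • η) := by
    intro η
    have hcomb : lam • (γA⁻¹ • (ξ - η)) + (1 - lam) • (γB⁻¹ • η)
        = (γA + γB)⁻¹ • ξ := by
      rw [h1lam, smul_smul, smul_smul]
      have e1 : γA / (γA + γB) * γA⁻¹ = (γA + γB)⁻¹ := by
        field_simp
      have e2 : γB / (γA + γB) * γB⁻¹ = (γA + γB)⁻¹ := by
        field_simp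
      rw [e1, e2, ← smul_add, sub_add_cancel]
    have h := hconv (γA⁻¹ • (ξ - η)) (γB⁻¹ • η) lam hlam_mem
    rw [hcomb] at h
    have h2 := smul_le_smul_of_nonneg_left h (le_of_lt hs)
    calc (γA + γB) • ρ ((γA + γB)⁻¹ • ξ)
        ≤ (γA + γB) • (lam • ρ (γA⁻¹ • (ξ - η)) + (1 - lam) • ρ (γB⁻¹ • η)) := h2
      _ = γA • ρ (γA⁻¹ • (ξ - η)) + γB • ρ (γB⁻¹ • η) := by
          rw [smul_add, smul_smul, smul_smul, h1lam]
          congr 2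
          · rw [hlam]; field_simp
          · field_simp
  -- equality at optimal transfer
  have heta : ξ - (γB / (γA + γB)) • ξ = (γA / (γA + γB)) • ξ := by
    rw [sub_eq_iff_eq_add, ← add_smul]
    have : γA / (γA + γB) + γB / (γA + γB) = 1 := by field_simp
    rw [this, one_smul]
  have hAe : γA⁻¹ • ((γA / (γA + γB)) • ξ) = (γA + γB)⁻¹ • ξ := by
    rw [smul_smul]; congr 1; field_simp
  have hBe : γB⁻¹ • ((γB / (γA + γB)) • ξ) = (γA + γB)⁻¹ • ξ := by
    rw [smul_smul]; congr 1; field_simp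
  have heq : (γA + γB) • ρ ((γA + γB)⁻¹ • ξ) =
      γA • ρ (γA⁻¹ • (ξ - (γB / (γA + γB)) • ξ)) +
        γB • ρ (γB⁻¹ • ((γB / (γA + γB)) • ξ)) := by
    rw [heta, hAe, hBe, ← add_smul]
  exact ⟨hineq, heq, ⟨⟨(γB / (γA + γB)) • ξ, heq⟩,
    by rintro v ⟨η, rfl⟩; exact hineq η⟩⟩
end

section
/- Let g be a uniformly Lipschitz generator. Then the following two conditions are equivalent. (a) There exists a constant C > 0 such that for all t ∈ [0,T], all y, y′ ∈ ℝⁿ and all z, z′ ∈ ℝ^{n×d}: −4⟨y⁻, g(t, y⁺ + y′, z) + g(t, −y′, −z′)⟩ ≤ 2·∑_{k=1}^{n} 1_{y_k<0}·|z_k − z′_k|² + C·|y⁻|². (b) For every k ∈ {1,…,n}, every t ∈ [0,T], every y′ ∈ ℝⁿ, every δ ∈ ℝⁿ with δ ≥ 0 and δ_k = 0, and all z, z′ ∈ ℝ^{n×d} with z_k = z′_k, one has g_k(t, δ + y′, z) ≥ −g_k(t, −y′, −z′). (This is the deterministic core of the theorem characterizing when the ask price dominates the bid price for the multidimensional g-pricing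 mechanism: the ask price E_g[ξ|F_s] dominates the bid price −E_g[−ξ|F_s] for all positions ξ if and only if (b) holds.) -/
open scoped RealInnerProductSpace

noncomputable section

lemma coord_le_norm {n : ℕ} (x : Vec n) (i : Fin n) : |x i| ≤ ‖x‖ := by
  have h1 : (x i)^2 ≤ ‖x‖^2 := by
    rw [PiLp.norm_sq_eq_of_L2]
    have := Finset.single_le_sum (f := fun j => ‖x j‖^2)
      (fun j _ => by positivity) (Finset.mem_univ i)
    simpa [Real.norm_eq_abs, sq_abs] using this
  nlinarith [abs_nonneg (x i), sq_abs (x i), norm_nonneg x]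

/-- the deterministic core of the theorem characterizing when the ask price
dominates the bid price for the multidimensional `g`-pricing mechanism. -/
theorem ask_bid_domination_criterion
    {n d : ℕ} (hn : 0 < n) (hd : 0 < d) (T : ℝ) (hT : 0 < T)
    (g : ℝ → Vec n → Mat n d → Vec n) (hg : UniformlyLipschitz T g) :
    (∃ C : ℝ, 0 < C ∧ ∀ t ∈ Set.Icc (0:ℝ) T, ∀ y y' : Vec n, ∀ z z' : Mat n d,
        -4 * ⟪neg y, g t (pos y + y') z + g t (-y') (-z')⟫ ≤
          2 * ∑ k : Fin n, (if y k < 0 then (1:ℝ) else 0) * ‖row z k - row z' k‖ ^ 2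
            + C * ‖neg y‖ ^ 2)
    ↔
    (∀ k : Fin n, ∀ t ∈ Set.Icc (0:ℝ) T, ∀ y' δ : Vec n,
        (∀ i, 0 ≤ δ i) → δ k = 0 →
        ∀ z z' : Mat n d, row z k = row z' k →
          -(g t (-y') (-z') k) ≤ g t (δ + y') z k) := by
  constructor
  · -- (a) → (b)
    rintro ⟨C, hC, h⟩ k t ht y' δ hδ hδk z z' hz
    refine le_of_forall_pos_le_add ?_
    intro ε hε
    set e : ℝ := 4 * ε / C with he
    have heps : 0 < e := by positivity
    set y : Vec n := WithLp.toLp 2 (fun i => if i = k then -e else δ i : Fin n → ℝ) with hy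
    have hpos : pos y = δ := by
      ext i
      by_cases hik : i = k
      · subst hik
        simp [pos, hy, hδk, le_of_lt heps]
      · simp [pos, hy, hik, (hδ i)]
    have hnegy : ∀ i, neg y i = if i = k then e else 0 := by
      intro i
      by_cases hik : i = k
      · subst hik; simp [neg, hy, le_of_lt heps]
      · simp [neg, hy, hik, (hδ i)]
    have hsum : ∑ i : Fin n, (if y i < 0 then (1:ℝ) else 0) * ‖row z i - row z' i‖ ^ 2
        = 0 := by
      refine Finset.sum_eq_zero fun i _ => ?_
      by_cases hik : i = k
      · subst hik; rw [hz]; simp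
      · have : ¬ (y i < 0) := by
          simp only [hy, PiLp.toLp_apply, hik, if_false]; exact not_lt.2 (hδ i)
        simp [this]
    have hinner : ⟪neg y, g t (pos y + y') z + g t (-y') (-z')⟫
        = e * ((g t (δ + y') z + g t (-y') (-z')) k) := by
      rw [hpos]
      simp only [PiLp.inner_apply, RCLike.inner_apply, conj_trivial]
      rw [Finset.sum_eq_single k]
      · rw [hnegy k]; simp [mul_comm]
      · intro i _ hik; rw [hnegy i]; simp [hik]
      · intro habs; exact absurd (Finset.mem_univ k) habs
    have hnorm : ‖neg y‖ ^ 2 = e ^ 2 := by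
      rw [PiLp.norm_sq_eq_of_L2]
      rw [Finset.sum_eq_single k]
      · rw [hnegy k]; simp [Real.norm_eq_abs, sq_abs]
      · intro i _ hik; rw [hnegy i]; simp [hik]
      · intro habs; exact absurd (Finset.mem_univ k) habs
    have := h t ht y y' z z'
    rw [hinner, hsum, hnorm] at this
    have key : -(g t (-y') (-z') k) ≤ g t (δ + y') z k + C * e / 4 := by
      have hadd : (g t (δ + y') z + g t (-y') (-z')) k
          = g t (δ + y') z k + g t (-y') (-z') k := rfl
      rw [hadd] at this
      nlinarith
    have : C * e / 4 = ε := by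
      rw [he]; field_simp
    linarith [key, this.ge]
  · -- (b) → (a)
    intro hb
    obtain ⟨L, hL, hLip⟩ := hg
    refine ⟨2 * L ^ 2 + 1, by positivity, ?_⟩
    intro t ht y y' z z'
    have hinner : ⟪neg y, g t (pos y + y') z + g t (-y') (-z')⟫
        = ∑ i : Fin n, neg y i * ((g t (pos y + y') z + g t (-y') (-z')) i) := by
      simp [PiLp.inner_apply, RCLike.inner_apply, conj_trivial, mul_comm]
    have hnorm : ‖neg y‖ ^ 2 = ∑ i : Fin n, (neg y i) ^ 2 := by
      rw [PiLp.norm_sq_eq_of_L2]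
      simp [Real.norm_eq_abs, sq_abs]
    rw [hinner, hnorm, Finset.mul_sum, Finset.mul_sum, Finset.mul_sum,
      ← Finset.sum_add_distrib]
    refine Finset.sum_le_sum fun i _ => ?_
    by_cases hyi : y i < 0
    · -- main case
      set a : ℝ := neg y i with ha
      have ha0 : 0 < a := by
        show (0:ℝ) < max (-(y i)) 0
        exact lt_max_of_lt_left (by linarith)
      set r : ℝ := ‖row z i - row z' i‖ with hr
      have hr0 : 0 ≤ r := norm_nonneg _
      -- modified matrix
      set zt : Mat n d := WithLp.toLp 2 (fun p => if p.1 = i then z' p else z p : Fin n × Fin d → ℝ)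
        with hzt
      have hrow : row zt i = row z' i := by
        ext j; simp [row, hzt]
      have hposi : pos y i = 0 := by
        simp [pos, le_of_lt hyi]
      have hb' := hb i t ht y' (pos y) (fun j => le_max_right _ _) hposi zt z' hrow
      -- Lipschitz bound between z and zt
      have hzzt : ‖z - zt‖ = r := by
        have h2 : ‖z - zt‖ ^ 2 = r ^ 2 := by
          rw [PiLp.norm_sq_eq_of_L2, PiLp.norm_sq_eq_of_L2, Fintype.sum_prod_type]
          rw [Finset.sum_eq_single i]
          · refine Finset.sum_congr rfl fun j _ => ?_
            show ‖z (i, j) - zt (i, j)‖ ^ 2 = ‖z (i, j) - z' (i, j)‖ ^ 2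
            simp [hzt]
          · intro b _ hbi
            refine Finset.sum_eq_zero fun j _ => ?_
            show ‖z (b, j) - zt (b, j)‖ ^ 2 = 0
            simp [hzt, hbi]
          · intro habs; exact absurd (Finset.mem_univ i) habs
        have := congrArg Real.sqrt h2
        rwa [Real.sqrt_sq (norm_nonneg _), Real.sqrt_sq hr0] at this
      have hgdiff : |g t (pos y + y') z i - g t (pos y + y') zt i| ≤ L * r := by
        have h1 : |(g t (pos y + y') z - g t (pos y + y') zt) i|
            ≤ ‖g t (pos y + y') z - g t (pos y + y') zt‖ := coord_le_norm _ i
        have h2 := hLip t ht (pos y + y') (pos y + y') z zt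
        rw [sub_self, norm_zero, zero_add, hzzt] at h2
        have h3 : (g t (pos y + y') z - g t (pos y + y') zt) i
            = g t (pos y + y') z i - g t (pos y + y') zt i := rfl
        rw [h3] at h1
        exact h1.trans h2
      have hkey : -(L * r) ≤ (g t (pos y + y') z + g t (-y') (-z')) i := by
        have hadd : (g t (pos y + y') z + g t (-y') (-z')) i
            = g t (pos y + y') z i + g t (-y') (-z') i := rfl
        rw [hadd]
        have := abs_le.mp hgdiff
        linarith [hb', this.1]
      simp only [if_pos hyi, one_mul]
      nlinarith [sq_nonneg (r - L * a), hkey, ha0]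
    · have ha : neg y i = 0 := by
        simp [neg, not_lt.mp hyi]
      simp [ha, hyi]
end
end
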